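/- Let n be a positive integer, α > 0, and i a positive integer. Define φ_i(x) = √2·sin((i−1/2)πx), λ_i = 1/((i−1/2)²π²), λ_{n,i} = (n/(αe))^{2n}·λ_i, φ_{n,i}(τ) = (αe/n)^{n/2}·φ_i(τⁿ e^{−ατ}·(αe/n)ⁿ), and ρ(τ) = (1/2)·τ^{n−1} e^{−ατ}·|n − ατ|. Then for every τ₁ ≥ 0, ∫₀^∞ min(τ₁ⁿ e^{−ατ₁}, τ₂ⁿ e^{−ατ₂}) · φ_{n,i}(τ₂) · ρ(τ₂) dτ₂ = λ_{n,i} · φ_{n,i}(τ₁). -/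

import Mathlib

open MeasureTheory Real Filter

/-- Eigenvalue `λ_{n,i} = (n/(αe))^{2n} · 1/((i-1/2)²π²)` of the multiple pole spline kernel. -/
noncomputable def lamMS (n : ℕ) (α : ℝ) (i : ℕ) : ℝ :=
  ((n : ℝ) / (α * Real.exp 1)) ^ (2 * n) * (1 / (((i : ℝ) - 1/2) ^ 2 * π ^ 2))

/-- Eigenfunction `φ_{n,i}(τ) = (αe/n)^{n/2} φᵢ(τⁿ e^{-ατ} (αe/n)ⁿ)` with
`φᵢ(x) = √2 sin((i-1/2)πx)`. -/
noncomputable def phiMS (n : ℕ) (α : ℝ) (i : ℕ) (τ : ℝ) : ℝ :=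
  (α * Real.exp 1 / (n : ℝ)) ^ ((n : ℝ) / 2) *
    (Real.sqrt 2 *
      Real.sin (((i : ℝ) - 1/2) * π * (τ ^ n * Real.exp (-α * τ) * (α * Real.exp 1 / (n : ℝ)) ^ n)))

/-- Density `ρ(τ) = (1/2) τ^{n-1} e^{-ατ} |n - ατ|` of the measure `dm`. -/
noncomputable def rhoMS (n : ℕ) (α : ℝ) (τ : ℝ) : ℝ :=
  (1/2) * τ ^ (n - 1) * Real.exp (-α * τ) * |(n : ℝ) - α * τ|

lemma hasDerivAt_gMS (n : ℕ) (hn : 1 ≤ n) (α : ℝ) (τ : ℝ) :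
    HasDerivAt (fun t : ℝ => t ^ n * Real.exp (-α * t))
      (τ ^ (n-1) * Real.exp (-α * τ) * ((n : ℝ) - α * τ)) τ := by
  have h1 : HasDerivAt (fun t : ℝ => t ^ n) ((n : ℝ) * τ ^ (n-1)) τ := hasDerivAt_pow n τ
  have h2 : HasDerivAt (fun t : ℝ => Real.exp (-α * t)) (Real.exp (-α * τ) * (-α)) τ :=
    by simpa using ((hasDerivAt_id τ).const_mul (-α)).exp
  have h3 := h1.mul h2
  refine h3.congr_deriv ?_
  have hτn : τ ^ n = τ ^ (n-1) * τ := by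
    conv_lhs => rw [← Nat.sub_add_cancel hn, pow_succ]
  rw [hτn]; ring

lemma gMS_le (n : ℕ) (hn : 1 ≤ n) (α : ℝ) (hα : 0 < α) (τ : ℝ) (hτ : 0 ≤ τ) :
    τ ^ n * Real.exp (-α * τ) ≤ ((n : ℝ)/α) ^ n * Real.exp (-(n : ℝ)) := by
  have hn0 : (0:ℝ) < n := by exact_mod_cast Nat.lt_of_lt_of_le Nat.zero_lt_one hn
  rcases eq_or_lt_of_le hτ with h | hτp
  · rw [← h, zero_pow (by omega), zero_mul]; positivity
  · have h1 : τ ^ n * Real.exp (-α * τ) = Real.exp ((n : ℝ) * Real.log τ + (-α * τ)) := by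
      rw [Real.exp_add, Real.exp_nat_mul, Real.exp_log hτp]
    have h2 : ((n : ℝ)/α) ^ n * Real.exp (-(n : ℝ))
        = Real.exp ((n : ℝ) * Real.log ((n : ℝ)/α) + (-(n : ℝ))) := by
      rw [Real.exp_add, Real.exp_nat_mul, Real.exp_log (by positivity)]
    rw [h1, h2, Real.exp_le_exp]
    have key := Real.log_le_sub_one_of_pos (show (0:ℝ) < α * τ / n by positivity)
    have e1 : Real.log (α * τ / n) = Real.log τ - Real.log ((n : ℝ)/α) := by
      rw [show α * τ / (n : ℝ) = τ / ((n : ℝ)/α) by field_simp]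
      exact Real.log_div (ne_of_gt hτp) (by positivity)
    rw [e1] at key
    have h4 : (n : ℝ) * (Real.log τ - Real.log ((n:ℝ)/α)) ≤ (n : ℝ) * (α * τ / n - 1) :=
      mul_le_mul_of_nonneg_left key hn0.le
    have h3 : (n : ℝ) * (α * τ / n - 1) = α * τ - n := by field_simp
    nlinarith

/-- For positive integers `n, i` and `α > 0`, for every `τ₁ ≥ 0`,
`∫₀^∞ min(τ₁ⁿe^{-ατ₁}, τ₂ⁿe^{-ατ₂}) φ_{n,i}(τ₂) ρ(τ₂) dτ₂ = λ_{n,i} φ_{n,i}(τ₁)`. -/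
theorem stmt_16 (n : ℕ) (hn : 1 ≤ n) (α : ℝ) (hα : 0 < α) (i : ℕ) (hi : 1 ≤ i)
    (τ₁ : ℝ) (hτ₁ : 0 ≤ τ₁) :
    ∫ τ₂ in Set.Ici (0 : ℝ),
        min (τ₁ ^ n * Real.exp (-α * τ₁)) (τ₂ ^ n * Real.exp (-α * τ₂)) *
          phiMS n α i τ₂ * rhoMS n α τ₂
      = lamMS n α i * phiMS n α i τ₁ := by
  have hnpos : (0:ℝ) < n := by exact_mod_cast Nat.lt_of_lt_of_le Nat.zero_lt_one hn
  have hπ := Real.pi_pos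
  set g : ℝ → ℝ := fun t => t ^ n * Real.exp (-α * t) with hgdef
  have hderiv : ∀ τ : ℝ, HasDerivAt g (τ ^ (n-1) * Real.exp (-α * τ) * ((n : ℝ) - α * τ)) τ :=
    fun τ => hasDerivAt_gMS n hn α τ
  set b : ℝ := (n:ℝ)/α with hbdef
  have hbpos : 0 < b := by positivity
  set M : ℝ := ((n:ℝ)/α) ^ n * Real.exp (-(n:ℝ)) with hMdef
  have hMpos : 0 < M := by positivity
  have hgle : ∀ τ : ℝ, 0 ≤ τ → g τ ≤ M := fun τ hτ => gMS_le n hn α hα τ hτ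
  have hgb : g b = M := by
    show b ^ n * Real.exp (-α * b) = M
    rw [hMdef, hbdef]
    congr 2
    field_simp
  have hg0 : g 0 = 0 := by
    show (0:ℝ) ^ n * Real.exp (-α * 0) = 0
    rw [zero_pow (by omega), zero_mul]
  have hgnn : ∀ τ : ℝ, 0 ≤ τ → 0 ≤ g τ := fun τ hτ => by
    show 0 ≤ τ ^ n * Real.exp (-α * τ); positivity
  have hgcont : Continuous g := by
    apply Continuous.mul (continuous_pow n)
    exact Real.continuous_exp.comp (continuous_const.mul continuous_id)
  -- monotonicity
  have hmono : StrictMonoOn g (Set.Icc 0 b) := by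
    apply strictMonoOn_of_deriv_pos (convex_Icc 0 b) hgcont.continuousOn
    intro τ hτ
    rw [interior_Icc] at hτ
    rw [(hderiv τ).deriv]
    have h1 : 0 < τ := hτ.1
    have h2 : α * τ < n := by
      have := hτ.2; rw [hbdef] at this
      have h := (lt_div_iff₀ hα).mp this
      linarith
    have h3 : (0:ℝ) < (n:ℝ) - α * τ := by linarith
    positivity
  have hanti : StrictAntiOn g (Set.Ici b) := by
    apply strictAntiOn_of_deriv_neg (convex_Ici b) hgcont.continuousOn
    intro τ hτ
    rw [interior_Ici] at hτ
    rw [(hderiv τ).deriv]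
    have h1 : 0 < τ := hbpos.trans hτ
    have h2 : (n:ℝ) < α * τ := by
      have := hτ; rw [hbdef] at this
      have h := (div_lt_iff₀ hα).mp this
      linarith
    have hneg : (n:ℝ) - α * τ < 0 := by linarith
    have hpos : 0 < τ ^ (n-1) * Real.exp (-α * τ) := by positivity
    exact mul_neg_of_pos_of_neg hpos hneg
  -- images
  have himg1 : g '' Set.Icc 0 b = Set.Icc 0 M := by
    apply Set.Subset.antisymm
    · rintro y ⟨τ, hτ, rfl⟩
      exact ⟨hgnn τ hτ.1, hgle τ hτ.1⟩
    · have h := intermediate_value_Icc hbpos.le hgcont.continuousOn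
      rw [hg0, hgb] at h
      exact h
  have htend : Tendsto g atTop (nhds 0) := by
    have h1 : Tendsto (fun t : ℝ => α * t) atTop atTop :=
      Filter.Tendsto.const_mul_atTop hα tendsto_id
    have h2 := (tendsto_pow_mul_exp_neg_atTop_nhds_zero n).comp h1
    have h3 := h2.const_mul ((1:ℝ)/α^n)
    rw [mul_zero] at h3
    apply h3.congr
    intro t
    show (1:ℝ)/α^n * ((α * t) ^ n * Real.exp (-(α * t))) = t ^ n * Real.exp (-α * t)
    rw [mul_pow, neg_mul]
    field_simp
  have himg2 : g '' Set.Ioi b = Set.Ioo 0 M := by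
    apply Set.Subset.antisymm
    · rintro y ⟨τ, hτ, rfl⟩
      have hτpos : 0 < τ := hbpos.trans hτ
      constructor
      · show 0 < τ ^ n * Real.exp (-α * τ); positivity
      · rw [← hgb]
        exact hanti Set.self_mem_Ici (Set.mem_Ici.mpr hτ.le) hτ
    · intro y hy
      obtain ⟨T, hTb, hTy⟩ : ∃ T, b < T ∧ g T < y := by
        have h1 := htend.eventually_lt_const hy.1
        obtain ⟨T, h⟩ := ((eventually_gt_atTop b).and h1).exists
        exact ⟨T, h.1, h.2⟩
      have h := intermediate_value_Icc' hTb.le hgcont.continuousOn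
      have hy2 : y ∈ Set.Icc (g T) (g b) := ⟨hTy.le, by rw [hgb]; exact hy.2.le⟩
      obtain ⟨τ, hτ, hτy⟩ := h hy2
      refine ⟨τ, ?_, hτy⟩
      rcases eq_or_lt_of_le hτ.1 with h' | h'
      · exfalso
        rw [← h', hgb] at hτy
        exact absurd hτy.symm (ne_of_lt hy.2)
      · exact h'
  -- constants
  set c : ℝ := (α * Real.exp 1 / (n:ℝ)) ^ n with hcdef
  have hcpos : 0 < c := by positivity
  set β : ℝ := ((i:ℝ) - 1/2) * π with hβdef
  have hβpos : 0 < β := by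
    apply mul_pos _ hπ
    have : (1:ℝ) ≤ i := by exact_mod_cast hi
    linarith
  set θ : ℝ := β * c with hθdef
  have hθpos : 0 < θ := mul_pos hβpos hcpos
  have hMc : M * c = 1 := by
    rw [hMdef, hcdef]
    have h1 : ((n:ℝ)/α) ^ n * (α * Real.exp 1 / (n:ℝ)) ^ n = Real.exp 1 ^ n := by
      rw [← mul_pow]
      congr 1
      field_simp
    calc ((n:ℝ)/α) ^ n * Real.exp (-(n:ℝ)) * (α * Real.exp 1 / (n:ℝ)) ^ n
        = ((n:ℝ)/α) ^ n * (α * Real.exp 1 / (n:ℝ)) ^ n * Real.exp (-(n:ℝ)) := by ring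
      _ = Real.exp 1 ^ n * Real.exp (-(n:ℝ)) := by rw [h1]
      _ = 1 := by
          rw [← Real.exp_nat_mul, mul_one, ← Real.exp_add]
          simp
  have hθM : θ * M = β := by
    calc θ * M = β * (M * c) := by rw [hθdef]; ring
      _ = β := by rw [hMc, mul_one]
  have hcosβ : Real.cos β = 0 := by
    rw [show β = (i:ℝ)*π - π/2 by rw [hβdef]; ring, Real.cos_sub_pi_div_two, Real.sin_nat_mul_pi]
  set C : ℝ := (α * Real.exp 1 / (n:ℝ)) ^ ((n:ℝ)/2) with hCdef
  set x : ℝ := τ₁ ^ n * Real.exp (-α * τ₁) with hxdef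
  have hgτ₁ : g τ₁ = x := rfl
  have hx0 : 0 ≤ x := hgnn τ₁ hτ₁
  have hxM : x ≤ M := hgle τ₁ hτ₁
  set k : ℝ := (1/2) * C * Real.sqrt 2 with hkdef
  set H : ℝ → ℝ := fun s => k * (min x s * Real.sin (θ * s)) with hHdef
  have hHcont : Continuous H := by
    apply continuous_const.mul
    exact (continuous_const.min continuous_id).mul
      (Real.continuous_sin.comp (continuous_const.mul continuous_id))
  -- pointwise identities
  have hphi : ∀ τ : ℝ, phiMS n α i τ = C * (Real.sqrt 2 * Real.sin (θ * g τ)) := by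
    intro τ
    show _ = C * (Real.sqrt 2 * Real.sin (θ * (τ ^ n * Real.exp (-α * τ))))
    unfold phiMS
    rw [← hCdef, ← hcdef, ← hβdef]
    congr 2
    rw [hθdef]
    ring
  have hrho : ∀ τ : ℝ, 0 ≤ τ →
      rhoMS n α τ = (1/2) * |τ ^ (n-1) * Real.exp (-α * τ) * ((n:ℝ) - α * τ)| := by
    intro τ hτ
    unfold rhoMS
    rw [abs_mul, abs_mul, abs_of_nonneg (pow_nonneg hτ _), abs_of_nonneg (Real.exp_pos _).le]
    ring
  have hEq : Set.EqOn
      (fun τ₂ : ℝ => min x (τ₂ ^ n * Real.exp (-α * τ₂)) * phiMS n α i τ₂ * rhoMS n α τ₂)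
      (fun τ₂ : ℝ => |τ₂ ^ (n-1) * Real.exp (-α * τ₂) * ((n:ℝ) - α * τ₂)| • H (g τ₂))
      (Set.Ici 0) := by
    intro τ hτ
    simp only
    rw [hphi τ, hrho τ hτ, smul_eq_mul]
    show min x (τ ^ n * Real.exp (-α * τ)) * (C * (Real.sqrt 2 * Real.sin (θ * g τ))) *
        ((1/2) * |τ ^ (n-1) * Real.exp (-α * τ) * ((n:ℝ) - α * τ)|)
      = |τ ^ (n-1) * Real.exp (-α * τ) * ((n:ℝ) - α * τ)| *
        (k * (min x (g τ) * Real.sin (θ * g τ)))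
    rw [hkdef]
    show _ = _ * ((1/2) * C * Real.sqrt 2 * (min x (τ ^ n * Real.exp (-α * τ)) * Real.sin (θ * (τ ^ n * Real.exp (-α * τ)))))
    ring
  -- change of variables
  have hder1 : ∀ τ ∈ Set.Icc (0:ℝ) b,
      HasDerivWithinAt g (τ ^ (n-1) * Real.exp (-α * τ) * ((n:ℝ) - α * τ)) (Set.Icc 0 b) τ :=
    fun τ _ => (hderiv τ).hasDerivWithinAt
  have hder2 : ∀ τ ∈ Set.Ioi b,
      HasDerivWithinAt g (τ ^ (n-1) * Real.exp (-α * τ) * ((n:ℝ) - α * τ)) (Set.Ioi b) τ :=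
    fun τ _ => (hderiv τ).hasDerivWithinAt
  have hinj2 : Set.InjOn g (Set.Ioi b) := hanti.injOn.mono Set.Ioi_subset_Ici_self
  have hcv1 : ∫ τ in Set.Icc (0:ℝ) b,
      |τ ^ (n-1) * Real.exp (-α * τ) * ((n:ℝ) - α * τ)| • H (g τ) = ∫ s in Set.Icc (0:ℝ) M, H s := by
    rw [← himg1]
    exact (integral_image_eq_integral_abs_deriv_smul measurableSet_Icc hder1 hmono.injOn H).symm
  have hcv2 : ∫ τ in Set.Ioi b,
      |τ ^ (n-1) * Real.exp (-α * τ) * ((n:ℝ) - α * τ)| • H (g τ) = ∫ s in Set.Ioo (0:ℝ) M, H s := by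
    rw [← himg2]
    exact (integral_image_eq_integral_abs_deriv_smul measurableSet_Ioi hder2 hinj2 H).symm
  -- integrability
  have hFcont : Continuous
      (fun τ₂ : ℝ => min x (τ₂ ^ n * Real.exp (-α * τ₂)) * phiMS n α i τ₂ * rhoMS n α τ₂) := by
    have c1 : Continuous fun τ₂ : ℝ => min x (τ₂ ^ n * Real.exp (-α * τ₂)) :=
      continuous_const.min hgcont
    have c2 : Continuous (phiMS n α i) := by
      unfold phiMS
      apply continuous_const.mul
      apply continuous_const.mul
      apply Real.continuous_sin.comp
      apply continuous_const.mul
      exact (hgcont.mul continuous_const)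
    have c3 : Continuous (rhoMS n α) := by
      unfold rhoMS
      apply Continuous.mul
      apply Continuous.mul
      · exact continuous_const.mul (continuous_pow _)
      · exact Real.continuous_exp.comp (continuous_const.mul continuous_id)
      · exact continuous_abs.comp (continuous_const.sub (continuous_const.mul continuous_id))
    exact (c1.mul c2).mul c3
  have hintF1 : IntegrableOn
      (fun τ₂ : ℝ => min x (τ₂ ^ n * Real.exp (-α * τ₂)) * phiMS n α i τ₂ * rhoMS n α τ₂)
      (Set.Icc 0 b) := hFcont.integrableOn_Icc
  have hint2 : IntegrableOn
      (fun τ : ℝ => |τ ^ (n-1) * Real.exp (-α * τ) * ((n:ℝ) - α * τ)| • H (g τ)) (Set.Ioi b) := by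
    rw [← integrableOn_image_iff_integrableOn_abs_deriv_smul measurableSet_Ioi hder2 hinj2 H]
    rw [himg2]
    exact (hHcont.integrableOn_Icc).mono_set Set.Ioo_subset_Icc_self
  have hintF2 : IntegrableOn
      (fun τ₂ : ℝ => min x (τ₂ ^ n * Real.exp (-α * τ₂)) * phiMS n α i τ₂ * rhoMS n α τ₂)
      (Set.Ioi b) := by
    apply hint2.congr_fun _ measurableSet_Ioi
    intro τ hτ
    exact (hEq (le_of_lt (hbpos.trans_le (le_of_lt hτ)))).symm
  -- assemble
  have hdisj : Disjoint (Set.Icc (0:ℝ) b) (Set.Ioi b) := by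
    rw [Set.disjoint_left]
    rintro τ h1 h2
    exact absurd h1.2 (not_le.mpr h2)
  rw [← Set.Icc_union_Ioi_eq_Ici hbpos.le,
    setIntegral_union hdisj measurableSet_Ioi hintF1 hintF2,
    setIntegral_congr_fun measurableSet_Icc (hEq.mono (by
      intro τ hτ
      exact hτ.1)),
    setIntegral_congr_fun measurableSet_Ioi (hEq.mono (by
      intro τ hτ
      exact le_of_lt (hbpos.trans hτ))),
    hcv1, hcv2, MeasureTheory.integral_Icc_eq_integral_Ioo]
  have hIoo : ∫ s in Set.Ioo (0:ℝ) M, H s = ∫ s in (0:ℝ)..M, H s := by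
    rw [intervalIntegral.integral_of_le hMpos.le, MeasureTheory.integral_Ioc_eq_integral_Ioo]
  rw [hIoo]
  -- the key interval integral computation
  have hI : ∫ s in (0:ℝ)..M, min x s * Real.sin (θ * s) = Real.sin (θ * x) / θ^2 := by
    have hcont1 : Continuous fun s : ℝ => min x s * Real.sin (θ * s) :=
      (continuous_const.min continuous_id).mul
        (Real.continuous_sin.comp (continuous_const.mul continuous_id))
    have hi1 : IntervalIntegrable (fun s => min x s * Real.sin (θ * s)) volume 0 x :=
      hcont1.intervalIntegrable _ _
    have hi2 : IntervalIntegrable (fun s => min x s * Real.sin (θ * s)) volume x M :=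
      hcont1.intervalIntegrable _ _
    rw [← intervalIntegral.integral_add_adjacent_intervals hi1 hi2]
    have e1 : ∫ s in (0:ℝ)..x, min x s * Real.sin (θ * s)
        = ∫ s in (0:ℝ)..x, s * Real.sin (θ * s) := by
      apply intervalIntegral.integral_congr
      intro s hs
      rw [Set.uIcc_of_le hx0] at hs
      show min x s * Real.sin (θ * s) = s * Real.sin (θ * s)
      rw [min_eq_right hs.2]
    have e2 : ∫ s in x..M, min x s * Real.sin (θ * s)
        = ∫ s in x..M, x * Real.sin (θ * s) := by
      apply intervalIntegral.integral_congr
      intro s hs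
      rw [Set.uIcc_of_le hxM] at hs
      show min x s * Real.sin (θ * s) = x * Real.sin (θ * s)
      rw [min_eq_left hs.1]
    have hθne : θ ≠ 0 := ne_of_gt hθpos
    have hsin : ∀ s : ℝ, HasDerivAt (fun u : ℝ => Real.sin (θ * u)) (Real.cos (θ * s) * θ) s := by
      intro s
      simpa using ((hasDerivAt_id s).const_mul θ).sin
    have hcos : ∀ s : ℝ, HasDerivAt (fun u : ℝ => Real.cos (θ * u)) (-Real.sin (θ * s) * θ) s := by
      intro s
      simpa using ((hasDerivAt_id s).const_mul θ).cos
    have hA : ∀ s : ℝ, HasDerivAt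
        (fun u : ℝ => Real.sin (θ * u)/θ^2 - u * Real.cos (θ * u)/θ)
        (s * Real.sin (θ * s)) s := by
      intro s
      have h1 := ((hsin s).div_const (θ^2)).sub (((hasDerivAt_id s).mul (hcos s)).div_const θ)
      refine h1.congr_deriv ?_
      simp only [id_eq]
      field_simp
      ring
    have hB : ∀ s : ℝ, HasDerivAt (fun u : ℝ => -Real.cos (θ * u)/θ) (Real.sin (θ * s)) s := by
      intro s
      have h1 := ((hcos s).neg).div_const θ
      refine h1.congr_deriv ?_
      field_simp
    have hcA : Continuous fun s : ℝ => s * Real.sin (θ * s) :=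
      continuous_id.mul (Real.continuous_sin.comp (continuous_const.mul continuous_id))
    have hcB : Continuous fun s : ℝ => Real.sin (θ * s) :=
      Real.continuous_sin.comp (continuous_const.mul continuous_id)
    rw [e1, e2,
      intervalIntegral.integral_eq_sub_of_hasDerivAt (fun s _ => hA s)
        (hcA.intervalIntegrable _ _),
      intervalIntegral.integral_const_mul,
      intervalIntegral.integral_eq_sub_of_hasDerivAt (fun s _ => hB s)
        (hcB.intervalIntegrable _ _)]
    have hcosM : Real.cos (θ * M) = 0 := by rw [hθM, hcosβ]
    rw [hcosM]
    simp only [mul_zero, Real.sin_zero, Real.cos_zero, zero_div, zero_mul, sub_zero, neg_zero]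
    field_simp
    ring
  have hkey : ∫ s in (0:ℝ)..M, H s = k * (Real.sin (θ * x) / θ^2) := by
    rw [hHdef]
    rw [intervalIntegral.integral_const_mul, hI]
  rw [hkey]
  -- final algebra
  have hlam : lamMS n α i = 1 / θ^2 := by
    have ha : ((n:ℝ)/(α * Real.exp 1))^n * c = 1 := by
      rw [hcdef, ← mul_pow,
        show (n:ℝ)/(α * Real.exp 1) * (α * Real.exp 1/(n:ℝ)) = 1 by field_simp, one_pow]
    have ha2 : (((n:ℝ)/(α * Real.exp 1))^n * c)^2 = 1 := by rw [ha]; norm_num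
    have hβ2 : ((i:ℝ) - 1/2)^2 * π^2 = β^2 := by rw [hβdef]; ring
    have h2n : ((n:ℝ)/(α * Real.exp 1))^(2*n) = (((n:ℝ)/(α * Real.exp 1))^n)^2 := by
      rw [mul_comm 2 n, pow_mul]
    have hβne : β ≠ 0 := ne_of_gt hβpos
    have hcne : c ≠ 0 := ne_of_gt hcpos
    have hc2 : (((n:ℝ)/(α * Real.exp 1))^n)^2 * c^2 = 1 := by
      rw [← mul_pow, ha, one_pow]
    unfold lamMS
    rw [h2n, hβ2, hθdef]
    rw [mul_pow β c, mul_one_div, div_eq_div_iff (pow_ne_zero 2 hβne) (by positivity)]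
    clear_value c β
    linear_combination β^2 * hc2
  rw [hphi τ₁, hgτ₁, hlam, hkdef]
  have hθne : θ ≠ 0 := ne_of_gt hθpos
  field_simp
  ring
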